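/- Let B be a blocking set of PG(m,2) with respect to k-spaces (1 ≤ k ≤ m−1). Then |B| ≥ 2^{m−k+1} − 1, with equality if and only if B is the point set of an (m−k)-space. -/

import Mathlib

open Finset

/-- `Vec n` is the vector space `F_2^n`. -/
abbrev Vec (n : ℕ) := Fin n → ZMod 2

/-- The standard dot product on `F_2^n`. -/
def dotp {n : ℕ} (a b : Vec n) : ZMod 2 := ∑ i, a i * b i

/-- The difference (derivative) function `D_{F,a}(x) = F(x) + F(x+a)`. -/
def Dder {n : ℕ} (F : Vec n → Vec n) (a x : Vec n) : Vec n := F x + F (x + a)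

/-- The linear hyperplane `H_b = {x : ⟨b,x⟩ = 0}`. -/
def Hyp {n : ℕ} (b : Vec n) : Set (Vec n) := {x | dotp b x = 0}

/-- The affine hyperplane `H̄_b = {x : ⟨b,x⟩ = 1}`. -/
def HypBar {n : ℕ} (b : Vec n) : Set (Vec n) := {x | dotp b x = 1}

/-- `T_b = {a : image(D_{F,a}) = H_b} ∪ {0}`. -/
def Tset {n : ℕ} (F : Vec n → Vec n) (b : Vec n) : Set (Vec n) :=
  {a | Set.range (Dder F a) = Hyp b} ∪ {0}

/-- `T̄_b = {a : image(D_{F,a}) = H̄_b}`. -/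
def TsetBar {n : ℕ} (F : Vec n → Vec n) (b : Vec n) : Set (Vec n) :=
  {a | Set.range (Dder F a) = HypBar b}

/-- `V_b = T_b ∪ T̄_b`. -/
def Vset {n : ℕ} (F : Vec n → Vec n) (b : Vec n) : Set (Vec n) := Tset F b ∪ TsetBar F b

/-- `F` is quadratic: all second derivatives are constant (algebraic degree ≤ 2). -/
def IsQuadratic {n m : ℕ} (F : Vec n → Vec m) : Prop :=
  ∀ a₁ a₂ : Vec n, ∃ c : Vec m, ∀ x, F (x + a₁ + a₂) + F (x + a₁) + F (x + a₂) + F x = c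

/-- `F` is APN: every equation `F(x) + F(x+a) = b`, `a ≠ 0`, has at most 2 solutions. -/
def IsAPN {n : ℕ} (F : Vec n → Vec n) : Prop :=
  ∀ a : Vec n, a ≠ 0 → ∀ b : Vec n, Nat.card {x : Vec n // F x + F (x + a) = b} ≤ 2

/-- The Walsh transform `W_F(b,a) = Σ_x (-1)^{⟨b,F(x)⟩ + ⟨a,x⟩}`. -/
def Walsh {n m : ℕ} (F : Vec n → Vec m) (b : Vec m) (a : Vec n) : ℤ :=
  ∑ x : Vec n, (-1 : ℤ) ^ ((dotp b (F x) + dotp a x).val)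

/-- The component `F_b` is bent: `|W_F(b,a)| = 2^{n/2}` for all `a`. -/
def IsBent {n m : ℕ} (F : Vec n → Vec m) (b : Vec m) : Prop :=
  ∀ a : Vec n, (Walsh F b a) ^ 2 = 2 ^ n

/-- The set `N_F` of non-trivial non-bent components of `F`. -/
def NF {n m : ℕ} (F : Vec n → Vec m) : Set (Vec m) := {b | b ≠ 0 ∧ ¬ IsBent F b}

/-- A vector space partition of `F_q^n`: a collection of nonzero subspaces such that
every nonzero vector lies in exactly one member. -/
def IsVSP {K : Type} [Field K] {n : ℕ} (𝒱 : Finset (Submodule K (Fin n → K))) : Prop :=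
  (∀ S ∈ 𝒱, S ≠ ⊥) ∧
  ∀ x : Fin n → K, x ≠ 0 → ∃! S : Submodule K (Fin n → K), S ∈ 𝒱 ∧ x ∈ S

/-- A blocking set of `PG(m,2)` (identified with `F_2^{m+1} \ {0}`) with respect to
`k`-spaces (nonzero parts of `(k+1)`-dimensional subspaces). -/
def PGBlocking (m k : ℕ) (B : Set (Fin (m + 1) → ZMod 2)) : Prop :=
  0 ∉ B ∧ ∀ S : Submodule (ZMod 2) (Fin (m + 1) → ZMod 2),
    Module.finrank (ZMod 2) S = k + 1 → ∃ x ∈ B, x ∈ S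

/-- `F_b` has amplitude `2^{(n+k)/2}`. -/
def HasAmp {n m : ℕ} (F : Vec n → Vec m) (b : Vec m) (k : ℕ) : Prop :=
  (∀ a, (Walsh F b a) ^ 2 = 0 ∨ (Walsh F b a) ^ 2 = 2 ^ (n + k)) ∧
  ∃ a, (Walsh F b a) ^ 2 = 2 ^ (n + k)


section BoseBurtonAux

open Module

lemma span2_cases {V : Type} [AddCommGroup V] [Module (ZMod 2) V] {p x : V}
    (h : x ∈ Submodule.span (ZMod 2) {p}) : x = 0 ∨ x = p := by
  rw [Submodule.mem_span_singleton] at h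
  obtain ⟨c, rfl⟩ := h
  rcases (by decide : ∀ c : ZMod 2, c = 0 ∨ c = 1) c with rfl | rfl
  · left; simp
  · right; simp

lemma card_module_eq (V : Type) [AddCommGroup V] [Module (ZMod 2) V] [Finite V] :
    Nat.card V = 2 ^ finrank (ZMod 2) V := by
  letI : Fintype V := Fintype.ofFinite V
  rw [Nat.card_eq_fintype_card, card_eq_pow_finrank (K := ZMod 2), ZMod.card]

lemma finrank_comap_mkQ {V : Type} [AddCommGroup V] [Module (ZMod 2) V]
    [Module.Finite (ZMod 2) V] (P : Submodule (ZMod 2) V)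
    (U : Submodule (ZMod 2) (V ⧸ P)) :
    finrank (ZMod 2) (U.comap P.mkQ) = finrank (ZMod 2) U + finrank (ZMod 2) P := by
  set S := U.comap P.mkQ with hS
  let g : S →ₗ[ZMod 2] V ⧸ P := P.mkQ.comp S.subtype
  have hrange : LinearMap.range g = U := by
    rw [LinearMap.range_comp, Submodule.range_subtype,
      Submodule.map_comap_eq_of_surjective P.mkQ_surjective]
  have hker : LinearMap.ker g = P.comap S.subtype := by
    rw [LinearMap.ker_comp, Submodule.ker_mkQ]
  have hPS : P ≤ S := by
    intro x hx
    have : P.mkQ x = 0 := (Submodule.Quotient.mk_eq_zero _).2 hx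
    simp [hS, Submodule.mem_comap, this]
  have h1 := LinearMap.finrank_range_add_finrank_ker g
  rw [hrange, hker,
    LinearEquiv.finrank_eq (Submodule.comapSubtypeEquivOfLe hPS)] at h1
  omega

theorem bose_burton_lower :
    ∀ d : ℕ, 1 ≤ d → ∀ (V : Type) [AddCommGroup V] [Module (ZMod 2) V] [Finite V],
      d ≤ finrank (ZMod 2) V → ∀ B : Set V, 0 ∉ B →
      (∀ S : Submodule (ZMod 2) V, finrank (ZMod 2) S = d → ∃ x ∈ B, x ∈ S) →
      2 ^ (finrank (ZMod 2) V - d + 1) - 1 ≤ B.ncard := by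
  intro d
  induction d with
  | zero => omega
  | succ d ih =>
    intro _ V _ _ _ hdim B h0B hblock
    set n := finrank (ZMod 2) V with hn
    have key : ({(0 : V)} : Set V)ᶜ ⊆ B → 2 ^ (n - (d + 1) + 1) - 1 ≤ B.ncard := by
      intro hsub
      have h1 : (({(0 : V)} : Set V)ᶜ).ncard ≤ B.ncard := Set.ncard_le_ncard hsub (Set.toFinite B)
      have h2 := Set.ncard_add_ncard_compl ({(0 : V)} : Set V)
      rw [Set.ncard_singleton] at h2
      have h3 : Nat.card V = 2 ^ n := card_module_eq V
      have h4 : 2 ^ (n - (d + 1) + 1) ≤ 2 ^ n :=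
        Nat.pow_le_pow_right (by norm_num) (by omega)
      omega
    rcases Nat.eq_zero_or_pos d with rfl | hd1
    · -- base case d + 1 = 1
      apply key
      intro v hv
      simp only [Set.mem_compl_iff, Set.mem_singleton_iff] at hv
      obtain ⟨x, hxB, hxS⟩ := hblock (Submodule.span (ZMod 2) {v})
        (finrank_span_singleton hv)
      rcases span2_cases hxS with rfl | rfl
      · exact absurd hxB h0B
      · exact hxB
    · by_cases hsub : ({(0 : V)} : Set V)ᶜ ⊆ B
      · exact key hsub
      · obtain ⟨p, hp0, hpB⟩ : ∃ p : V, p ≠ 0 ∧ p ∉ B := by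
          rw [Set.not_subset] at hsub
          obtain ⟨p, hp1, hp2⟩ := hsub
          exact ⟨p, by simpa using hp1, hp2⟩
        set P : Submodule (ZMod 2) V := Submodule.span (ZMod 2) {p} with hP
        haveI : Finite (V ⧸ P) := Finite.of_surjective _ P.mkQ_surjective
        have hfrP : finrank (ZMod 2) P = 1 := finrank_span_singleton hp0
        have hfrQ : finrank (ZMod 2) (V ⧸ P) = n - 1 := by
          have := P.finrank_quotient_add_finrank
          omega
        set B' : Set (V ⧸ P) := P.mkQ '' B with hB'
        have h0B' : (0 : V ⧸ P) ∉ B' := by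
          rintro ⟨x, hxB, hx0⟩
          have hxP : x ∈ P := (Submodule.Quotient.mk_eq_zero _).1 hx0
          rcases span2_cases hxP with rfl | rfl
          · exact h0B hxB
          · exact hpB hxB
        have hblock' : ∀ U : Submodule (ZMod 2) (V ⧸ P),
            finrank (ZMod 2) U = d → ∃ y ∈ B', y ∈ U := by
          intro U hU
          have hScard : finrank (ZMod 2) (U.comap P.mkQ) = d + 1 := by
            rw [finrank_comap_mkQ]; omega
          obtain ⟨x, hxB, hxS⟩ := hblock _ hScard
          exact ⟨P.mkQ x, Set.mem_image_of_mem _ hxB, hxS⟩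
        have hlow := ih hd1 (V ⧸ P) (by omega) B' h0B' hblock'
        have himg : B'.ncard ≤ B.ncard := Set.ncard_image_le (Set.toFinite B)
        have he : finrank (ZMod 2) (V ⧸ P) - d + 1 = n - (d + 1) + 1 := by omega
        rw [he] at hlow
        omega

end BoseBurtonAux

theorem stmt_16 {m k : ℕ} (hk1 : 1 ≤ k) (hk2 : k + 1 ≤ m)
    (B : Set (Fin (m + 1) → ZMod 2)) (hB : PGBlocking m k B) :
    2 ^ (m - k + 1) - 1 ≤ B.ncard ∧
    (B.ncard = 2 ^ (m - k + 1) - 1 ↔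
      ∃ S : Submodule (ZMod 2) (Fin (m + 1) → ZMod 2),
        Module.finrank (ZMod 2) S = m - k + 1 ∧ B = (S : Set (Fin (m + 1) → ZMod 2)) \ {0}) := by
  obtain ⟨h0B, hblock⟩ := hB
  have hfr : Module.finrank (ZMod 2) (Fin (m + 1) → ZMod 2) = m + 1 :=
    Module.finrank_fin_fun (ZMod 2)
  have hlow := bose_burton_lower (k + 1) (by omega) (Fin (m + 1) → ZMod 2)
    (by rw [hfr]; omega) B h0B hblock
  rw [hfr] at hlow
  have he : m + 1 - (k + 1) + 1 = m - k + 1 := by omega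
  rw [he] at hlow
  refine ⟨hlow, ?_, ?_⟩
  · intro hcard
    -- step 1: for each p ∉ B ∪ {0}, the quotient map by span{p} is injective on B
    have hinj : ∀ p : Fin (m + 1) → ZMod 2, p ≠ 0 → p ∉ B →
        Set.InjOn (Submodule.span (ZMod 2) {p}).mkQ B := by
      intro p hp0 hpB
      set P : Submodule (ZMod 2) (Fin (m + 1) → ZMod 2) :=
        Submodule.span (ZMod 2) {p} with hP
      haveI : Finite ((Fin (m + 1) → ZMod 2) ⧸ P) :=
        Finite.of_surjective _ P.mkQ_surjective
      have hfrP : Module.finrank (ZMod 2) P = 1 := finrank_span_singleton hp0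
      have hfrQ : Module.finrank (ZMod 2) ((Fin (m + 1) → ZMod 2) ⧸ P) = m := by
        have := P.finrank_quotient_add_finrank
        rw [hfr] at this; omega
      have h0B' : (0 : (Fin (m + 1) → ZMod 2) ⧸ P) ∉ P.mkQ '' B := by
        rintro ⟨x, hxB, hx0⟩
        have hxP : x ∈ P := (Submodule.Quotient.mk_eq_zero _).1 hx0
        rcases span2_cases hxP with rfl | rfl
        · exact h0B hxB
        · exact hpB hxB
      have hblock' : ∀ U : Submodule (ZMod 2) ((Fin (m + 1) → ZMod 2) ⧸ P),
          Module.finrank (ZMod 2) U = k → ∃ y ∈ P.mkQ '' B, y ∈ U := by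
        intro U hU
        have hScard : Module.finrank (ZMod 2) (U.comap P.mkQ) = k + 1 := by
          rw [finrank_comap_mkQ]; omega
        obtain ⟨x, hxB, hxS⟩ := hblock _ hScard
        exact ⟨P.mkQ x, Set.mem_image_of_mem _ hxB, hxS⟩
      have hlow' := bose_burton_lower k hk1 ((Fin (m + 1) → ZMod 2) ⧸ P)
        (by rw [hfrQ]; omega) (P.mkQ '' B) h0B' hblock'
      rw [hfrQ] at hlow'
      have himg : (P.mkQ '' B).ncard ≤ B.ncard := Set.ncard_image_le (Set.toFinite B)
      have heq : (P.mkQ '' B).ncard = B.ncard :=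
        le_antisymm himg (hcard.trans_le hlow')
      exact Set.injOn_of_ncard_image_eq heq (Set.toFinite B)
    -- step 2: B ∪ {0} is closed under addition
    have hadd : ∀ x ∈ B, ∀ y ∈ B, x + y ∈ B ∪ {0} := by
      intro x hx y hy
      by_cases hxy : x = y
      · subst hxy
        have hxx : x + x = 0 := by
          funext i; exact (by decide : ∀ a : ZMod 2, a + a = 0) (x i)
        rw [hxx]; exact Or.inr rfl
      · by_contra hz
        have hz0 : x + y ≠ 0 := by
          intro h0
          apply hxy
          funext i
          exact (by decide : ∀ a b : ZMod 2, a + b = 0 → a = b) (x i) (y i)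
            (by simpa using congrFun h0 i)
        have hzB : x + y ∉ B := fun h => hz (Or.inl h)
        have hI := hinj (x + y) hz0 hzB
        have hmk : (Submodule.span (ZMod 2) {x + y}).mkQ x
            = (Submodule.span (ZMod 2) {x + y}).mkQ y := by
          rw [Submodule.mkQ_apply, Submodule.mkQ_apply, Submodule.Quotient.eq]
          have hsub : x - y = x + y := by
            funext i
            exact (by decide : ∀ a b : ZMod 2, a - b = a + b) (x i) (y i)
          rw [hsub]
          exact Submodule.mem_span_singleton_self _
        exact hxy (hI hx hy hmk)
    -- step 3: build the submodule
    let S : Submodule (ZMod 2) (Fin (m + 1) → ZMod 2) :=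
      { carrier := B ∪ {0}
        zero_mem' := Or.inr rfl
        add_mem' := by
          rintro a b (ha | ha) (hb | hb)
          · exact hadd a ha b hb
          · rw [Set.mem_singleton_iff] at hb
            subst hb; rw [add_zero]; exact Or.inl ha
          · rw [Set.mem_singleton_iff] at ha
            subst ha; rw [zero_add]; exact Or.inl hb
          · rw [Set.mem_singleton_iff] at ha hb
            subst ha; subst hb; rw [add_zero]; exact Or.inr rfl
        smul_mem' := by
          intro c x hx
          rcases (by decide : ∀ c : ZMod 2, c = 0 ∨ c = 1) c with rfl | rfl
          · rw [zero_smul]; exact Or.inr rfl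
          · rw [one_smul]; exact hx }
    have hScoe : (S : Set (Fin (m + 1) → ZMod 2)) = B ∪ {0} := rfl
    have h1 : Nat.card S = (B ∪ ({0} : Set (Fin (m + 1) → ZMod 2))).ncard := by
      rw [← Nat.card_coe_set_eq, ← hScoe, SetLike.coe_sort_coe]
    have h2 : (B ∪ ({0} : Set (Fin (m + 1) → ZMod 2))).ncard = 2 ^ (m - k + 1) := by
      rw [Set.union_singleton, Set.ncard_insert_of_notMem h0B (Set.toFinite B), hcard]
      have h5 : 1 ≤ 2 ^ (m - k + 1) := Nat.one_le_two_pow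
      omega
    have hfrS : Module.finrank (ZMod 2) S = m - k + 1 := by
      have h3 := card_module_eq S
      rw [h1, h2] at h3
      exact (Nat.pow_right_injective (le_refl 2) h3).symm
    refine ⟨S, hfrS, ?_⟩
    ext x
    constructor
    · intro hxB
      refine ⟨Or.inl hxB, ?_⟩
      intro h
      rw [Set.mem_singleton_iff] at h
      exact h0B (h ▸ hxB)
    · rintro ⟨hx, hx0⟩
      have hx' : x ∈ B ∪ ({0} : Set (Fin (m + 1) → ZMod 2)) := hx
      rcases hx' with h | h
      · exact h
      · exact absurd h hx0
  · rintro ⟨S, hSfr, rfl⟩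
    have hc : Nat.card S = 2 ^ (m - k + 1) := by
      rw [card_module_eq, hSfr]
    have h0S : (0 : Fin (m + 1) → ZMod 2) ∈ (S : Set (Fin (m + 1) → ZMod 2)) := S.zero_mem
    have hd := Set.ncard_diff_singleton_of_mem h0S
    have h2 : (S : Set (Fin (m + 1) → ZMod 2)).ncard = 2 ^ (m - k + 1) := by
      rw [← Nat.card_coe_set_eq, SetLike.coe_sort_coe]
      exact hc
    rw [hd, h2]
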